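/- Let d ∈ ℕ, 1 < p < ∞, 1 < q < ∞, r := max{2, p, q}, s > 0 and ϱ > 0. Let λ = (λ_{j,l})_{j,l∈ℕ} be a double sequence of reals with ‖λ‖_{s,p,∞} ≤ ϱ, and define μ = (μ_{j,l}) by μ_{j,l} := ‖λ‖_{0,p,q}^{r−q} · 2^{j d (1/2 − 1/p) q} ( ∑_{m} |λ_{j,m}|^p )^{(q−p)/p} · sgn(λ_{j,l}) |λ_{j,l}|^{p−1}, with μ_{j,l} := 0 whenever λ_{j,l} = 0. Set p' := p/(p−1) and q' := q/(q−1). Then for every a > s(q−1) there exists a constant c > 0, depending only on d, p, q, s and a but not on λ, ϱ or j, such that: ‖μ‖_{s(q−1),p',∞} ≤ c ϱ^{r−1}, and for all j ∈ ℕ, ‖Q_j μ‖_{a,p',q'} ≤ c ϱ^{r−1} 2^{j(a − s(q−1))} and ‖μ − Q_j μ‖_{0,p',q'} ≤ c ϱ^{r−1} 2^{−j s(q−1)}. -/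

import Mathlib

open scoped ENNReal
set_option maxHeartbeats 2000000

/-- The Besov sequence norm
`‖λ‖_{s,p,q} = (∑_j 2^{jsq} 2^{jd(1/2−1/p)q} (∑_l |λ_{j,l}|^p)^{q/p})^{1/q}`,
with values in `[0,∞]`. -/
noncomputable def besovNorm (d : ℕ) (s p q : ℝ) (lam : ℕ → ℕ → ℝ) : ℝ≥0∞ :=
  (∑' j : ℕ, ((2 : ℝ≥0∞) ^ ((j : ℝ) * s * q) *
      (2 : ℝ≥0∞) ^ ((j : ℝ) * d * (1 / 2 - 1 / p) * q) *
      (∑' l : ℕ, (ENNReal.ofReal |lam j l|) ^ p) ^ (q / p))) ^ (1 / q)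

/-- The Besov sequence norm with fine index `q = ∞`:
`‖λ‖_{s,p,∞} = sup_j 2^{js} 2^{jd(1/2−1/p)} (∑_l |λ_{j,l}|^p)^{1/p}`. -/
noncomputable def besovNormInf (d : ℕ) (s p : ℝ) (lam : ℕ → ℕ → ℝ) : ℝ≥0∞ :=
  ⨆ j : ℕ, (2 : ℝ≥0∞) ^ ((j : ℝ) * s) *
      (2 : ℝ≥0∞) ^ ((j : ℝ) * d * (1 / 2 - 1 / p)) *
      (∑' l : ℕ, (ENNReal.ofReal |lam j l|) ^ p) ^ (1 / p)

/-- The level-`j` truncation `(Q_j λ)_{k,l} = λ_{k,l}` if `k ≤ j`, else `0`. -/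
def trunc (j : ℕ) (lam : ℕ → ℕ → ℝ) : ℕ → ℕ → ℝ :=
  fun k l => if k ≤ j then lam k l else 0

/-- The sequence `μ` representing the subgradient of `(1/r)‖·‖_{B^0_{p,q}}^r` at `λ`,
with `r = max{2,p,q}`:
`μ_{j,l} = ‖λ‖_{0,p,q}^{r−q} 2^{jd(1/2−1/p)q} (∑_m |λ_{j,m}|^p)^{(q−p)/p} sgn(λ_{j,l}) |λ_{j,l}|^{p−1}`. -/
noncomputable def subgradSeq (d : ℕ) (p q : ℝ) (lam : ℕ → ℕ → ℝ) : ℕ → ℕ → ℝ :=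
  fun j l =>
    (besovNorm d 0 p q lam).toReal ^ (max 2 (max p q) - q) *
      (2 : ℝ) ^ ((j : ℝ) * d * (1 / 2 - 1 / p) * q) *
      ((∑' m : ℕ, (ENNReal.ofReal |lam j m|) ^ p).toReal) ^ ((q - p) / p) *
      Real.sign (lam j l) * |lam j l| ^ (p - 1)


lemma two_rpow_eq (x : ℝ) : (2:ℝ≥0∞) ^ x = ENNReal.ofReal ((2:ℝ) ^ x) := by
  rw [show (2:ℝ≥0∞) = ENNReal.ofReal 2 by norm_num, ENNReal.ofReal_rpow_of_pos two_pos]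

lemma tsum_shift (f : ℕ → ℝ≥0∞) (j : ℕ) (h : ∀ k ≤ j, f k = 0) :
    ∑' k, f k = ∑' m, f (m + (j+1)) := by
  refine (Function.Injective.tsum_eq (add_left_injective (j+1)) ?_).symm
  intro x hx
  rcases le_or_gt x j with hle | hgt
  · exact absurd (h x hle) hx
  · exact ⟨x - (j+1), by simp; omega⟩

lemma geom_head (x : ℝ) (hx : 1 < x) (j : ℕ) :
    ∑ k ∈ Finset.range (j+1), x^k ≤ x^j * (x/(x-1)) := by
  have hx1 : x - 1 > 0 := by linarith
  rw [geom_sum_eq (ne_of_gt hx)]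
  rw [div_le_iff₀ hx1] at *
  have h2 : x^j * (x / (x-1)) * (x-1) = x^(j+1) := by field_simp; ring
  rw [h2]
  have : (0:ℝ) < x^(j+1) := by positivity
  linarith

lemma abs_sign_rpow (x e : ℝ) (he : e ≠ 0) : |Real.sign x * |x| ^ e| = |x| ^ e := by
  rcases lt_trichotomy x 0 with h | h | h
  · rw [Real.sign_of_neg h, abs_mul, abs_neg, abs_one, one_mul,
      abs_of_nonneg (Real.rpow_nonneg (abs_nonneg x) e)]
  · simp [h, Real.sign_zero, Real.zero_rpow he]
  · rw [Real.sign_of_pos h, one_mul, abs_of_nonneg (Real.rpow_nonneg (abs_nonneg x) e)]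

lemma abs_subgrad (d : ℕ) (p q : ℝ) (hp1 : 1 < p) (lam : ℕ → ℕ → ℝ) (j l : ℕ) :
    |subgradSeq d p q lam j l| =
      ((besovNorm d 0 p q lam).toReal ^ (max 2 (max p q) - q) *
        (2:ℝ) ^ ((j:ℝ) * d * (1/2 - 1/p) * q) *
        ((∑' m : ℕ, (ENNReal.ofReal |lam j m|) ^ p).toReal) ^ ((q-p)/p)) * |lam j l| ^ (p-1) := by
  unfold subgradSeq
  rw [mul_assoc _ (Real.sign (lam j l)) _, abs_mul, abs_sign_rpow _ _ (by linarith)]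
  congr 1
  have h1 : (0:ℝ) ≤ (besovNorm d 0 p q lam).toReal ^ (max 2 (max p q) - q) :=
    Real.rpow_nonneg ENNReal.toReal_nonneg _
  have h2 : (0:ℝ) ≤ (2:ℝ) ^ ((j:ℝ) * d * (1/2 - 1/p) * q) := (Real.rpow_pos_of_pos two_pos _).le
  have h3 : (0:ℝ) ≤ ((∑' m : ℕ, (ENNReal.ofReal |lam j m|) ^ p).toReal) ^ ((q-p)/p) :=
    Real.rpow_nonneg ENNReal.toReal_nonneg _
  rw [abs_of_nonneg (by positivity)]

lemma besov_inner_sum (d : ℕ) (p q : ℝ) (hp1 : 1 < p) (lam : ℕ → ℕ → ℝ) (j : ℕ) :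
    (∑' l : ℕ, (ENNReal.ofReal |subgradSeq d p q lam j l|) ^ (p/(p-1))) =
      (ENNReal.ofReal ((besovNorm d 0 p q lam).toReal ^ (max 2 (max p q) - q) *
        (2:ℝ) ^ ((j:ℝ) * d * (1/2 - 1/p) * q) *
        ((∑' m : ℕ, (ENNReal.ofReal |lam j m|) ^ p).toReal) ^ ((q-p)/p))) ^ (p/(p-1)) *
      (∑' l : ℕ, (ENNReal.ofReal |lam j l|) ^ p) := by
  have hp0 : (0:ℝ) < p := by linarith
  have hpm : (0:ℝ) < p - 1 := by linarith
  have hp' : (0:ℝ) ≤ p / (p-1) := by positivity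
  have hpp' : (p - 1) * (p / (p-1)) = p := by field_simp
  rw [← ENNReal.tsum_mul_left]
  congr 1; funext l
  rw [abs_subgrad d p q hp1 lam j l, ENNReal.ofReal_mul (by positivity),
    ENNReal.mul_rpow_of_nonneg _ _ hp',
    ← ENNReal.ofReal_rpow_of_nonneg (abs_nonneg _) hpm.le,
    ← ENNReal.rpow_mul, hpp']

lemma rpow_identity (p q s d' jj σ Nr : ℝ) (hp1 : 1 < p) (hσ : 0 < σ) :
    (2:ℝ) ^ (jj * d' * (1/2 - 1/(p/(p-1)))) *
      (Nr * (2:ℝ) ^ (jj * d' * (1/2 - 1/p) * q) * σ ^ ((q-p)/p)) *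
      σ ^ (1/(p/(p-1)))
    = Nr * ((2:ℝ) ^ (jj * s) * (2:ℝ) ^ (jj * d' * (1/2 - 1/p)) * σ ^ (1/p)) ^ (q-1) *
      (2:ℝ) ^ (-(jj * (s * (q-1)))) := by
  have hp0 : (0:ℝ) < p := by linarith
  have hpm : (0:ℝ) < p - 1 := by linarith
  rw [Real.mul_rpow (by positivity) (Real.rpow_nonneg hσ.le _),
      Real.mul_rpow (by positivity) (by positivity),
      ← Real.rpow_mul (by norm_num : (0:ℝ) ≤ 2),
      ← Real.rpow_mul (by norm_num : (0:ℝ) ≤ 2),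
      ← Real.rpow_mul hσ.le]
  simp only [Real.rpow_def_of_pos two_pos, Real.rpow_def_of_pos hσ]
  have key : ∀ (a b c e : ℝ), Real.exp a * (Nr * Real.exp b * Real.exp c) * Real.exp e
      = Nr * Real.exp (a+b+c+e) := by
    intros a b c e; rw [Real.exp_add, Real.exp_add, Real.exp_add]; ring
  have key2 : ∀ (a b c e : ℝ), Nr * (Real.exp a * Real.exp b * Real.exp c) * Real.exp e
      = Nr * Real.exp (a+b+c+e) := by
    intros a b c e; rw [Real.exp_add, Real.exp_add, Real.exp_add]; ring
  rw [key, key2]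
  congr 1
  rw [one_div_div]
  field_simp
  ring

/-- Corollary 3.7 in sequence form: if `‖λ‖_{s,p,∞} ≤ ϱ` and `a > s(q−1)`, then the subgradient
sequence `μ` satisfies `‖μ‖_{s(q−1),p',∞} ≤ c ϱ^{r−1}`,
`‖Q_j μ‖_{a,p',q'} ≤ c ϱ^{r−1} 2^{j(a−s(q−1))}` and
`‖μ − Q_j μ‖_{0,p',q'} ≤ c ϱ^{r−1} 2^{−js(q−1)}`, with `c` independent of `λ`, `ϱ` and `j`. -/
theorem stmt_12 (d : ℕ) (p q s a : ℝ) (hp1 : 1 < p) (hq1 : 1 < q) (hs : 0 < s)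
    (ha : s * (q - 1) < a) :
    ∃ c : ℝ, 0 < c ∧ ∀ ϱ : ℝ, 0 < ϱ → ∀ lam : ℕ → ℕ → ℝ,
      besovNormInf d s p lam ≤ ENNReal.ofReal ϱ →
      (besovNormInf d (s * (q - 1)) (p / (p - 1)) (subgradSeq d p q lam) ≤
          ENNReal.ofReal (c * ϱ ^ (max 2 (max p q) - 1))) ∧
      (∀ j : ℕ,
        besovNorm d a (p / (p - 1)) (q / (q - 1)) (trunc j (subgradSeq d p q lam)) ≤
          ENNReal.ofReal (c * ϱ ^ (max 2 (max p q) - 1) *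
            (2 : ℝ) ^ ((j : ℝ) * (a - s * (q - 1))))) ∧
      (∀ j : ℕ,
        besovNorm d 0 (p / (p - 1)) (q / (q - 1))
            (fun k l => subgradSeq d p q lam k l - trunc j (subgradSeq d p q lam) k l) ≤
          ENNReal.ofReal (c * ϱ ^ (max 2 (max p q) - 1) *
            (2 : ℝ) ^ (-(j : ℝ) * s * (q - 1)))) := by
  classical
  have hp0 : (0:ℝ) < p := by linarith
  have hq0 : (0:ℝ) < q := by linarith
  have hpm : (0:ℝ) < p - 1 := by linarith
  have hqm : (0:ℝ) < q - 1 := by linarith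
  have hp'0 : (0:ℝ) < p / (p-1) := by positivity
  have hq'0 : (0:ℝ) < q / (q-1) := by positivity
  have hrq : q ≤ max 2 (max p q) := le_trans (le_max_right p q) (le_max_right 2 _)
  have hr1 : (1:ℝ) ≤ max 2 (max p q) := le_trans one_le_two (le_max_left _ _)
  have hs' : (0:ℝ) < s * (q-1) := by positivity
  have he : (0:ℝ) < a - s*(q-1) := by linarith
  -- constants
  set t0 : ℝ := (2:ℝ)^(-(s*q)) with ht0def
  have ht0pos : 0 < t0 := Real.rpow_pos_of_pos two_pos _
  have ht0lt : t0 < 1 := Real.rpow_lt_one_of_one_lt_of_neg one_lt_two (neg_lt_zero.mpr (by positivity))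
  have h1t0 : 0 < 1 - t0 := by linarith
  set C1 : ℝ := ((1-t0)⁻¹)^(1/q) with hC1def
  have hC1pos : 0 < C1 := Real.rpow_pos_of_pos (by positivity) _
  set x : ℝ := (2:ℝ)^((a - s*(q-1))*(q/(q-1))) with hxdef
  have hx1 : 1 < x := Real.one_lt_rpow_iff_of_pos two_pos |>.mpr (Or.inl ⟨one_lt_two, by positivity⟩)
  set C2 : ℝ := x/(x-1) with hC2def
  have hC2pos : 0 < C2 := by
    have : 0 < x - 1 := by linarith
    positivity
  set y : ℝ := (2:ℝ)^(-((s*(q-1))*(q/(q-1)))) with hydef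
  have hypos : 0 < y := Real.rpow_pos_of_pos two_pos _
  have hylt : y < 1 := Real.rpow_lt_one_of_one_lt_of_neg one_lt_two (neg_lt_zero.mpr (by positivity))
  have h1y : 0 < 1 - y := by linarith
  set C3 : ℝ := (1-y)⁻¹ with hC3def
  have hC3pos : 0 < C3 := by positivity
  set c : ℝ := C1^(max 2 (max p q) - q) * (1 + C2^(1/(q/(q-1))) + C3^(1/(q/(q-1)))) with hcdef
  have hmulpos : 0 < 1 + C2^(1/(q/(q-1))) + C3^(1/(q/(q-1))) := by
    have h2 : 0 ≤ C2^(1/(q/(q-1))) := (Real.rpow_pos_of_pos hC2pos _).le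
    have h3 : 0 ≤ C3^(1/(q/(q-1))) := (Real.rpow_pos_of_pos hC3pos _).le
    linarith
  have hcpos : 0 < c := mul_pos (Real.rpow_pos_of_pos hC1pos _) hmulpos
  refine ⟨c, hcpos, ?_⟩
  intro ϱ hϱ lam hlam
  unfold besovNormInf at hlam
  rw [iSup_le_iff] at hlam
  -- finiteness of level sums
  have hSfin : ∀ j : ℕ, (∑' l : ℕ, (ENNReal.ofReal |lam j l|) ^ p) ≠ ⊤ := by
    intro j hS
    have h := hlam j
    rw [hS, ENNReal.top_rpow_of_pos (by positivity)] at h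
    rw [ENNReal.mul_top (by
      apply mul_ne_zero <;>
      · rw [two_rpow_eq]
        simp [ENNReal.ofReal_eq_zero, not_le, Real.rpow_pos_of_pos two_pos])] at h
    exact (ENNReal.ofReal_ne_top) (top_le_iff.mp h)
  -- real form of the hypothesis
  have hreal : ∀ j : ℕ, (2:ℝ)^((j:ℝ)*s) * (2:ℝ)^((j:ℝ)*d*(1/2-1/p)) *
      ((∑' l : ℕ, (ENNReal.ofReal |lam j l|) ^ p).toReal)^(1/p) ≤ ϱ := by
    intro j
    have h := hlam j
    rw [← ENNReal.ofReal_toReal (hSfin j), two_rpow_eq, two_rpow_eq,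
      ENNReal.ofReal_rpow_of_nonneg ENNReal.toReal_nonneg (by positivity : (0:ℝ) ≤ 1/p),
      ← ENNReal.ofReal_mul (by positivity), ← ENNReal.ofReal_mul (by positivity)] at h
    exact (ENNReal.ofReal_le_ofReal_iff hϱ.le).mp h
  have hGnn : ∀ j : ℕ, 0 ≤ (2:ℝ)^((j:ℝ)*s) * (2:ℝ)^((j:ℝ)*d*(1/2-1/p)) *
      ((∑' l : ℕ, (ENNReal.ofReal |lam j l|) ^ p).toReal)^(1/p) := by
    intro j
    have := Real.rpow_nonneg (ENNReal.toReal_nonneg (a := ∑' l : ℕ, (ENNReal.ofReal |lam j l|) ^ p)) (1/p)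
    positivity
  -- bound on the B^0_{p,q} norm
  have hNle : besovNorm d 0 p q lam ≤ ENNReal.ofReal (C1 * ϱ) := by
    unfold besovNorm
    have hterm : ∀ j : ℕ, (2:ℝ≥0∞)^((j:ℝ)*0*q) * (2:ℝ≥0∞)^((j:ℝ)*d*(1/2-1/p)*q) *
        (∑' l : ℕ, (ENNReal.ofReal |lam j l|)^p)^(q/p)
        ≤ ENNReal.ofReal (ϱ^q) * (ENNReal.ofReal t0)^j := by
      intro j
      set σ : ℝ := (∑' l : ℕ, (ENNReal.ofReal |lam j l|)^p).toReal with hσdef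
      have hσnn : 0 ≤ σ := ENNReal.toReal_nonneg
      have hb : (2:ℝ)^((j:ℝ)*d*(1/2-1/p)) * σ^(1/p) ≤ ϱ * (2:ℝ)^(-((j:ℝ)*s)) := by
        have h := hreal j
        have h2 : (0:ℝ) < (2:ℝ)^((j:ℝ)*s) := Real.rpow_pos_of_pos two_pos _
        rw [Real.rpow_neg (by norm_num : (0:ℝ) ≤ 2), ← div_eq_mul_inv, le_div_iff₀ h2]
        calc (2:ℝ)^((j:ℝ)*d*(1/2-1/p)) * σ^(1/p) * (2:ℝ)^((j:ℝ)*s)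
            = (2:ℝ)^((j:ℝ)*s) * (2:ℝ)^((j:ℝ)*d*(1/2-1/p)) * σ^(1/p) := by ring
          _ ≤ ϱ := h
      have e0 : ((j:ℝ)*0*q) = 0 := by ring
      rw [e0, ENNReal.rpow_zero, one_mul,
        ← ENNReal.ofReal_toReal (hSfin j), two_rpow_eq,
        ENNReal.ofReal_rpow_of_nonneg hσnn (by positivity : (0:ℝ) ≤ q/p),
        ← ENNReal.ofReal_mul (by positivity),
        ← ENNReal.ofReal_pow ht0pos.le, ← ENNReal.ofReal_mul (by positivity)]
      apply ENNReal.ofReal_le_ofReal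
      have hL : (2:ℝ)^((j:ℝ)*d*(1/2-1/p)*q) * σ^(q/p)
          = ((2:ℝ)^((j:ℝ)*d*(1/2-1/p)) * σ^(1/p))^q := by
        rw [Real.mul_rpow (by positivity) (Real.rpow_nonneg hσnn _),
          ← Real.rpow_mul (by norm_num : (0:ℝ) ≤ 2), ← Real.rpow_mul hσnn]
        congr 1
        ring
      have hR : ϱ^q * t0^j = (ϱ * (2:ℝ)^(-((j:ℝ)*s)))^q := by
        rw [Real.mul_rpow hϱ.le (Real.rpow_pos_of_pos two_pos _).le]
        congr 1
        rw [ht0def, ← Real.rpow_natCast ((2:ℝ)^(-(s*q))) j,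
          ← Real.rpow_mul (by norm_num : (0:ℝ) ≤ 2), ← Real.rpow_mul (by norm_num : (0:ℝ) ≤ 2)]
        congr 1
        ring
      rw [hL, hR]
      exact Real.rpow_le_rpow (by positivity) hb hq0.le
    calc (∑' j : ℕ, (2:ℝ≥0∞)^((j:ℝ)*0*q) * (2:ℝ≥0∞)^((j:ℝ)*d*(1/2-1/p)*q) *
            (∑' l : ℕ, (ENNReal.ofReal |lam j l|)^p)^(q/p))^(1/q)
        ≤ (∑' j : ℕ, ENNReal.ofReal (ϱ^q) * (ENNReal.ofReal t0)^j)^(1/q) :=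
          ENNReal.rpow_le_rpow (ENNReal.tsum_le_tsum hterm) (by positivity)
      _ = (ENNReal.ofReal (ϱ^q) * (1 - ENNReal.ofReal t0)⁻¹)^(1/q) := by
          rw [ENNReal.tsum_mul_left, ENNReal.tsum_geometric]
      _ = ENNReal.ofReal ((ϱ^q * (1-t0)⁻¹)^(1/q)) := by
          rw [show (1:ℝ≥0∞) - ENNReal.ofReal t0 = ENNReal.ofReal (1 - t0) by
              rw [ENNReal.ofReal_sub _ ht0pos.le, ENNReal.ofReal_one],
            ← ENNReal.ofReal_inv_of_pos h1t0, ← ENNReal.ofReal_mul (by positivity),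
            ENNReal.ofReal_rpow_of_nonneg (by positivity) (by positivity)]
      _ = ENNReal.ofReal (C1 * ϱ) := by
          congr 1
          rw [Real.mul_rpow (by positivity) (by positivity), one_div q,
            Real.rpow_rpow_inv hϱ.le (ne_of_gt hq0), mul_comm, hC1def, one_div]
  set Nr : ℝ := (besovNorm d 0 p q lam).toReal with hNrdef
  have hNr0 : 0 ≤ Nr := ENNReal.toReal_nonneg
  have hNr : Nr ≤ C1 * ϱ := ENNReal.toReal_le_of_le_ofReal (by positivity) hNle
  set KK : ℝ := Nr^(max 2 (max p q) - q) * ϱ^(q-1) with hKKdef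
  have hKK0 : 0 ≤ KK := mul_nonneg (Real.rpow_nonneg hNr0 _) (Real.rpow_nonneg hϱ.le _)
  have hKKle : KK ≤ C1^(max 2 (max p q) - q) * ϱ^(max 2 (max p q) - 1) := by
    have h1 : Nr^(max 2 (max p q) - q) ≤ (C1*ϱ)^(max 2 (max p q) - q) :=
      Real.rpow_le_rpow hNr0 hNr (by linarith)
    have h2 : (C1*ϱ)^(max 2 (max p q) - q) = C1^(max 2 (max p q) - q) * ϱ^(max 2 (max p q) - q) :=
      Real.mul_rpow hC1pos.le hϱ.le
    have h3 : ϱ^(max 2 (max p q) - q) * ϱ^(q-1) = ϱ^(max 2 (max p q) - 1) := by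
      rw [← Real.rpow_add hϱ]; ring_nf
    calc KK ≤ (C1*ϱ)^(max 2 (max p q) - q) * ϱ^(q-1) := by
          exact mul_le_mul_of_nonneg_right h1 (Real.rpow_nonneg hϱ.le _)
      _ = C1^(max 2 (max p q) - q) * ϱ^(max 2 (max p q) - 1) := by rw [h2, mul_assoc, h3]
  -- the key level bound
  have key : ∀ j : ℕ, (2:ℝ≥0∞)^((j:ℝ)*d*(1/2-1/(p/(p-1)))) *
      (∑' l : ℕ, (ENNReal.ofReal |subgradSeq d p q lam j l|)^(p/(p-1)))^(1/(p/(p-1)))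
      ≤ ENNReal.ofReal (KK * (2:ℝ)^(-((j:ℝ)*(s*(q-1))))) := by
    intro j
    rw [besov_inner_sum d p q hp1 lam j, ← hNrdef]
    rcases eq_or_ne (∑' l : ℕ, (ENNReal.ofReal |lam j l|)^p) 0 with h0 | h0
    · rw [h0, mul_zero, ENNReal.zero_rpow_of_pos (by positivity), mul_zero]
      exact zero_le
    · set σ : ℝ := (∑' l : ℕ, (ENNReal.ofReal |lam j l|)^p).toReal with hσdef
      have hσpos : 0 < σ := ENNReal.toReal_pos h0 (hSfin j)
      rw [show (∑' l : ℕ, (ENNReal.ofReal |lam j l|)^p) = ENNReal.ofReal σ from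
        (ENNReal.ofReal_toReal (hSfin j)).symm]
      have hA : 0 ≤ Nr^(max 2 (max p q) - q) * (2:ℝ)^((j:ℝ)*d*(1/2-1/p)*q) * σ^((q-p)/p) := by
        have := Real.rpow_nonneg hσpos.le ((q-p)/p)
        have := Real.rpow_nonneg hNr0 (max 2 (max p q) - q)
        positivity
      rw [ENNReal.mul_rpow_of_nonneg _ _ (by positivity : (0:ℝ) ≤ 1/(p/(p-1))),
        ← ENNReal.rpow_mul, mul_one_div_cancel (ne_of_gt hp'0), ENNReal.rpow_one,
        ENNReal.ofReal_rpow_of_nonneg hσpos.le (by positivity : (0:ℝ) ≤ 1/(p/(p-1))),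
        two_rpow_eq, ← ENNReal.ofReal_mul hA,
        ← ENNReal.ofReal_mul (by positivity)]
      apply ENNReal.ofReal_le_ofReal
      rw [← mul_assoc, rpow_identity p q s (d:ℝ) (j:ℝ) σ (Nr^(max 2 (max p q) - q)) hp1 hσpos,
        hKKdef]
      have hG := hreal j
      have hGnn' := hGnn j
      have hGle : ((2:ℝ)^((j:ℝ)*s) * (2:ℝ)^((j:ℝ)*d*(1/2-1/p)) * σ^(1/p))^(q-1) ≤ ϱ^(q-1) :=
        Real.rpow_le_rpow hGnn' hG (by linarith)
      have h2w : (0:ℝ) ≤ (2:ℝ)^(-((j:ℝ)*(s*(q-1)))) := (Real.rpow_pos_of_pos two_pos _).le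
      exact mul_le_mul_of_nonneg_right
        (mul_le_mul_of_nonneg_left hGle (Real.rpow_nonneg hNr0 _)) h2w
  have hC2q0 : (0:ℝ) ≤ C2^(1/(q/(q-1))) := (Real.rpow_pos_of_pos hC2pos _).le
  have hC3q0 : (0:ℝ) ≤ C3^(1/(q/(q-1))) := (Real.rpow_pos_of_pos hC3pos _).le
  have hC1r0 : (0:ℝ) ≤ C1^(max 2 (max p q) - q) := (Real.rpow_pos_of_pos hC1pos _).le
  have hC1c : C1^(max 2 (max p q) - q) ≤ c := by
    rw [hcdef]
    nlinarith
  have hC1C2c : C1^(max 2 (max p q) - q) * C2^(1/(q/(q-1))) ≤ c := by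
    rw [hcdef]
    nlinarith
  have hC1C3c : C1^(max 2 (max p q) - q) * C3^(1/(q/(q-1))) ≤ c := by
    rw [hcdef]
    nlinarith
  have hKKc : KK ≤ c * ϱ^(max 2 (max p q) - 1) :=
    hKKle.trans (mul_le_mul_of_nonneg_right hC1c (Real.rpow_nonneg hϱ.le _))
  have hKKC2c : KK * C2^(1/(q/(q-1))) ≤ c * ϱ^(max 2 (max p q) - 1) := by
    calc KK * C2^(1/(q/(q-1)))
        ≤ (C1^(max 2 (max p q) - q) * ϱ^(max 2 (max p q) - 1)) * C2^(1/(q/(q-1))) :=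
          mul_le_mul_of_nonneg_right hKKle hC2q0
      _ = (C1^(max 2 (max p q) - q) * C2^(1/(q/(q-1)))) * ϱ^(max 2 (max p q) - 1) := by ring
      _ ≤ c * ϱ^(max 2 (max p q) - 1) :=
          mul_le_mul_of_nonneg_right hC1C2c (Real.rpow_nonneg hϱ.le _)
  have hKKC3c : KK * C3^(1/(q/(q-1))) ≤ c * ϱ^(max 2 (max p q) - 1) := by
    calc KK * C3^(1/(q/(q-1)))
        ≤ (C1^(max 2 (max p q) - q) * ϱ^(max 2 (max p q) - 1)) * C3^(1/(q/(q-1))) :=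
          mul_le_mul_of_nonneg_right hKKle hC3q0
      _ = (C1^(max 2 (max p q) - q) * C3^(1/(q/(q-1)))) * ϱ^(max 2 (max p q) - 1) := by ring
      _ ≤ c * ϱ^(max 2 (max p q) - 1) :=
          mul_le_mul_of_nonneg_right hC1C3c (Real.rpow_nonneg hϱ.le _)
  refine ⟨?_, ?_, ?_⟩
  · unfold besovNormInf
    apply iSup_le
    intro j
    rw [mul_assoc]
    calc (2:ℝ≥0∞)^((j:ℝ)*(s*(q-1))) *
          ((2:ℝ≥0∞)^((j:ℝ)*d*(1/2-1/(p/(p-1)))) *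
            (∑' l : ℕ, (ENNReal.ofReal |subgradSeq d p q lam j l|)^(p/(p-1)))^(1/(p/(p-1))))
        ≤ (2:ℝ≥0∞)^((j:ℝ)*(s*(q-1))) * ENNReal.ofReal (KK * (2:ℝ)^(-((j:ℝ)*(s*(q-1))))) :=
          mul_le_mul_right (key j) _
      _ = ENNReal.ofReal KK := by
          rw [two_rpow_eq, ← ENNReal.ofReal_mul (by positivity)]
          congr 1
          rw [Real.rpow_neg (by norm_num : (0:ℝ) ≤ 2)]
          have h2u : (0:ℝ) < (2:ℝ)^((j:ℝ)*(s*(q-1))) := Real.rpow_pos_of_pos two_pos _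
          field_simp
      _ ≤ ENNReal.ofReal (c * ϱ^(max 2 (max p q) - 1)) := ENNReal.ofReal_le_ofReal hKKc
  · intro j
    unfold besovNorm
    have hstep : ∀ k : ℕ,
        (2:ℝ≥0∞)^((k:ℝ)*a*(q/(q-1))) *
          (2:ℝ≥0∞)^((k:ℝ)*d*(1/2-1/(p/(p-1)))*(q/(q-1))) *
          (∑' l : ℕ, (ENNReal.ofReal |trunc j (subgradSeq d p q lam) k l|)^(p/(p-1)))^((q/(q-1))/(p/(p-1)))
        ≤ (if k ≤ j then ENNReal.ofReal (KK^(q/(q-1)) * x^k) else 0) := by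
      intro k
      by_cases hk : k ≤ j
      · rw [if_pos hk]
        have htr : ∀ l : ℕ, trunc j (subgradSeq d p q lam) k l = subgradSeq d p q lam k l :=
          fun l => if_pos hk
        simp only [htr]
        rw [show (2:ℝ≥0∞)^((k:ℝ)*a*(q/(q-1))) = ((2:ℝ≥0∞)^((k:ℝ)*a))^(q/(q-1)) from
            ENNReal.rpow_mul _ _ _,
          show (2:ℝ≥0∞)^((k:ℝ)*d*(1/2-1/(p/(p-1)))*(q/(q-1)))
              = ((2:ℝ≥0∞)^((k:ℝ)*d*(1/2-1/(p/(p-1)))))^(q/(q-1)) from ENNReal.rpow_mul _ _ _,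
          show (q/(q-1))/(p/(p-1)) = (1/(p/(p-1)))*(q/(q-1)) by ring,
          ENNReal.rpow_mul
            (∑' l : ℕ, (ENNReal.ofReal |subgradSeq d p q lam k l|)^(p/(p-1))) (1/(p/(p-1))) (q/(q-1)),
          ← ENNReal.mul_rpow_of_nonneg _ _ hq'0.le, ← ENNReal.mul_rpow_of_nonneg _ _ hq'0.le]
        have hbase : (2:ℝ≥0∞)^((k:ℝ)*a) * (2:ℝ≥0∞)^((k:ℝ)*d*(1/2-1/(p/(p-1)))) *
            (∑' l : ℕ, (ENNReal.ofReal |subgradSeq d p q lam k l|)^(p/(p-1)))^(1/(p/(p-1)))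
            ≤ ENNReal.ofReal (KK * (2:ℝ)^((k:ℝ)*(a - s*(q-1)))) := by
          rw [mul_assoc]
          calc (2:ℝ≥0∞)^((k:ℝ)*a) *
                ((2:ℝ≥0∞)^((k:ℝ)*d*(1/2-1/(p/(p-1)))) *
                  (∑' l : ℕ, (ENNReal.ofReal |subgradSeq d p q lam k l|)^(p/(p-1)))^(1/(p/(p-1))))
              ≤ (2:ℝ≥0∞)^((k:ℝ)*a) * ENNReal.ofReal (KK * (2:ℝ)^(-((k:ℝ)*(s*(q-1))))) :=
                mul_le_mul_right (key k) _
            _ = ENNReal.ofReal (KK * (2:ℝ)^((k:ℝ)*(a - s*(q-1)))) := by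
                rw [two_rpow_eq, ← ENNReal.ofReal_mul (by positivity)]
                congr 1
                rw [mul_comm KK, ← mul_assoc, ← Real.rpow_add two_pos, mul_comm _ KK]
                congr 2
                ring
        refine le_trans (ENNReal.rpow_le_rpow hbase hq'0.le) ?_
        rw [ENNReal.ofReal_rpow_of_nonneg
          (mul_nonneg hKK0 (Real.rpow_pos_of_pos two_pos _).le) hq'0.le]
        apply le_of_eq
        congr 1
        rw [Real.mul_rpow hKK0 (Real.rpow_pos_of_pos two_pos _).le]
        congr 1
        rw [hxdef, ← Real.rpow_natCast ((2:ℝ)^((a - s*(q-1))*(q/(q-1)))) k,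
          ← Real.rpow_mul (by norm_num : (0:ℝ) ≤ 2), ← Real.rpow_mul (by norm_num : (0:ℝ) ≤ 2)]
        congr 1
        ring
      · rw [if_neg hk]
        have h0 : (∑' l : ℕ, (ENNReal.ofReal |trunc j (subgradSeq d p q lam) k l|)^(p/(p-1))) = 0 := by
          simp [trunc, hk, ENNReal.zero_rpow_of_pos hp'0]
        rw [h0, ENNReal.zero_rpow_of_pos (by positivity), mul_zero]
    refine le_trans (ENNReal.rpow_le_rpow (ENNReal.tsum_le_tsum hstep)
      (by positivity : (0:ℝ) ≤ 1/(q/(q-1)))) ?_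
    rw [tsum_eq_sum (s := Finset.range (j+1))
      (by intro k hk; rw [if_neg (by simpa using hk)])]
    have hsum : (∑ k ∈ Finset.range (j+1),
        (if k ≤ j then ENNReal.ofReal (KK^(q/(q-1)) * x^k) else 0))
        ≤ ENNReal.ofReal (KK^(q/(q-1)) * (x^j * C2)) := by
      rw [Finset.sum_congr rfl (fun k hk => if_pos (by simpa [Nat.lt_succ_iff] using hk)),
        ← ENNReal.ofReal_sum_of_nonneg (fun k _ =>
          mul_nonneg (Real.rpow_nonneg hKK0 _) (pow_nonneg (by linarith : (0:ℝ) ≤ x) k))]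
      apply ENNReal.ofReal_le_ofReal
      rw [← Finset.mul_sum]
      exact mul_le_mul_of_nonneg_left (geom_head x hx1 j) (Real.rpow_nonneg hKK0 _)
    refine le_trans (ENNReal.rpow_le_rpow hsum (by positivity : (0:ℝ) ≤ 1/(q/(q-1)))) ?_
    rw [ENNReal.ofReal_rpow_of_nonneg
      (mul_nonneg (Real.rpow_nonneg hKK0 _)
        (mul_nonneg (pow_nonneg (by linarith : (0:ℝ) ≤ x) j) hC2pos.le))
      (by positivity : (0:ℝ) ≤ 1/(q/(q-1)))]
    apply ENNReal.ofReal_le_ofReal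
    have hKKq : (KK^(q/(q-1)))^(1/(q/(q-1))) = KK := by
      rw [one_div, Real.rpow_rpow_inv hKK0 (ne_of_gt hq'0)]
    have hxj : ((x:ℝ)^j)^(1/(q/(q-1))) = (2:ℝ)^((j:ℝ)*(a - s*(q-1))) := by
      rw [hxdef, ← Real.rpow_natCast ((2:ℝ)^((a - s*(q-1))*(q/(q-1)))) j,
        ← Real.rpow_mul (by norm_num : (0:ℝ) ≤ 2), ← Real.rpow_mul (by norm_num : (0:ℝ) ≤ 2)]
      congr 1
      field_simp
    rw [Real.mul_rpow (Real.rpow_nonneg hKK0 _)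
        (mul_nonneg (pow_nonneg (by linarith : (0:ℝ) ≤ x) j) hC2pos.le),
      Real.mul_rpow (pow_nonneg (by linarith : (0:ℝ) ≤ x) j) hC2pos.le, hKKq, hxj]
    have h2j : (0:ℝ) < (2:ℝ)^((j:ℝ)*(a - s*(q-1))) := Real.rpow_pos_of_pos two_pos _
    calc KK * ((2:ℝ)^((j:ℝ)*(a - s*(q-1))) * C2^(1/(q/(q-1))))
        = (KK * C2^(1/(q/(q-1)))) * (2:ℝ)^((j:ℝ)*(a - s*(q-1))) := by ring
      _ ≤ (c * ϱ^(max 2 (max p q) - 1)) * (2:ℝ)^((j:ℝ)*(a - s*(q-1))) :=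
          mul_le_mul_of_nonneg_right hKKC2c h2j.le
      _ = c * ϱ^(max 2 (max p q) - 1) * (2:ℝ)^((j:ℝ)*(a - s*(q-1))) := by ring
  · intro j
    unfold besovNorm
    have hstep : ∀ k : ℕ,
        (2:ℝ≥0∞)^((k:ℝ)*0*(q/(q-1))) *
          (2:ℝ≥0∞)^((k:ℝ)*d*(1/2-1/(p/(p-1)))*(q/(q-1))) *
          (∑' l : ℕ, (ENNReal.ofReal
            |subgradSeq d p q lam k l - trunc j (subgradSeq d p q lam) k l|)^(p/(p-1)))^((q/(q-1))/(p/(p-1)))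
        ≤ (if k ≤ j then 0 else ENNReal.ofReal (KK^(q/(q-1)) * y^k)) := by
      intro k
      by_cases hk : k ≤ j
      · rw [if_pos hk]
        have h0 : (∑' l : ℕ, (ENNReal.ofReal
            |subgradSeq d p q lam k l - trunc j (subgradSeq d p q lam) k l|)^(p/(p-1))) = 0 := by
          simp [trunc, hk, ENNReal.zero_rpow_of_pos hp'0]
        rw [h0, ENNReal.zero_rpow_of_pos (by positivity), mul_zero]
      · rw [if_neg hk]
        have htr : ∀ l : ℕ, subgradSeq d p q lam k l - trunc j (subgradSeq d p q lam) k l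
            = subgradSeq d p q lam k l := by
          intro l; simp [trunc, hk]
        simp only [htr]
        rw [show ((k:ℝ)*0*(q/(q-1))) = 0 by ring, ENNReal.rpow_zero, one_mul,
          show (2:ℝ≥0∞)^((k:ℝ)*d*(1/2-1/(p/(p-1)))*(q/(q-1)))
              = ((2:ℝ≥0∞)^((k:ℝ)*d*(1/2-1/(p/(p-1)))))^(q/(q-1)) from ENNReal.rpow_mul _ _ _,
          show (q/(q-1))/(p/(p-1)) = (1/(p/(p-1)))*(q/(q-1)) by ring,
          ENNReal.rpow_mul
            (∑' l : ℕ, (ENNReal.ofReal |subgradSeq d p q lam k l|)^(p/(p-1))) (1/(p/(p-1))) (q/(q-1)),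
          ← ENNReal.mul_rpow_of_nonneg _ _ hq'0.le]
        refine le_trans (ENNReal.rpow_le_rpow (key k) hq'0.le) ?_
        rw [ENNReal.ofReal_rpow_of_nonneg
          (mul_nonneg hKK0 (Real.rpow_pos_of_pos two_pos _).le) hq'0.le]
        apply le_of_eq
        congr 1
        rw [Real.mul_rpow hKK0 (Real.rpow_pos_of_pos two_pos _).le]
        congr 1
        rw [hydef, ← Real.rpow_natCast ((2:ℝ)^(-(s*(q-1)*(q/(q-1))))) k,
          ← Real.rpow_mul (by norm_num : (0:ℝ) ≤ 2), ← Real.rpow_mul (by norm_num : (0:ℝ) ≤ 2)]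
        congr 1
        ring
    refine le_trans (ENNReal.rpow_le_rpow (ENNReal.tsum_le_tsum hstep)
      (by positivity : (0:ℝ) ≤ 1/(q/(q-1)))) ?_
    rw [tsum_shift _ j (fun k hk => if_pos hk)]
    have hterm2 : ∀ m : ℕ, (if m + (j+1) ≤ j then (0:ℝ≥0∞)
        else ENNReal.ofReal (KK^(q/(q-1)) * y^(m+(j+1))))
        = ENNReal.ofReal (KK^(q/(q-1)) * y^(j+1)) * (ENNReal.ofReal y)^m := by
      intro m
      rw [if_neg (by omega), ← ENNReal.ofReal_pow hypos.le,
        ← ENNReal.ofReal_mul (mul_nonneg (Real.rpow_nonneg hKK0 _) (pow_nonneg hypos.le _))]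
      congr 1
      rw [pow_add]
      ring
    rw [tsum_congr hterm2, ENNReal.tsum_mul_left, ENNReal.tsum_geometric,
      show (1:ℝ≥0∞) - ENNReal.ofReal y = ENNReal.ofReal (1-y) by
        rw [ENNReal.ofReal_sub _ hypos.le, ENNReal.ofReal_one],
      ← ENNReal.ofReal_inv_of_pos h1y,
      ← ENNReal.ofReal_mul (mul_nonneg (Real.rpow_nonneg hKK0 _) (pow_nonneg hypos.le _)),
      ENNReal.ofReal_rpow_of_nonneg
        (mul_nonneg (mul_nonneg (Real.rpow_nonneg hKK0 _) (pow_nonneg hypos.le _)) (by positivity))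
        (by positivity : (0:ℝ) ≤ 1/(q/(q-1)))]
    apply ENNReal.ofReal_le_ofReal
    rw [← hC3def]
    have hKKq : (KK^(q/(q-1)))^(1/(q/(q-1))) = KK := by
      rw [one_div, Real.rpow_rpow_inv hKK0 (ne_of_gt hq'0)]
    have hyj : ((y:ℝ)^(j+1))^(1/(q/(q-1))) = (2:ℝ)^(-(((j:ℝ)+1)*(s*(q-1)))) := by
      rw [hydef, ← Real.rpow_natCast ((2:ℝ)^(-(s*(q-1)*(q/(q-1))))) (j+1),
        ← Real.rpow_mul (by norm_num : (0:ℝ) ≤ 2), ← Real.rpow_mul (by norm_num : (0:ℝ) ≤ 2)]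
      congr 1
      push_cast
      field_simp
    rw [Real.mul_rpow (mul_nonneg (Real.rpow_nonneg hKK0 _) (pow_nonneg hypos.le _)) hC3pos.le,
      Real.mul_rpow (Real.rpow_nonneg hKK0 _) (pow_nonneg hypos.le _), hKKq, hyj]
    have hmono : (2:ℝ)^(-(((j:ℝ)+1)*(s*(q-1)))) ≤ (2:ℝ)^(-(j:ℝ)*s*(q-1)) :=
      Real.rpow_le_rpow_of_exponent_le one_le_two (by nlinarith)
    have h2jp : (0:ℝ) < (2:ℝ)^(-(((j:ℝ)+1)*(s*(q-1)))) := Real.rpow_pos_of_pos two_pos _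
    have hcr : (0:ℝ) ≤ c * ϱ^(max 2 (max p q) - 1) :=
      mul_nonneg hcpos.le (Real.rpow_nonneg hϱ.le _)
    calc KK * (2:ℝ)^(-(((j:ℝ)+1)*(s*(q-1)))) * C3^(1/(q/(q-1)))
        = (KK * C3^(1/(q/(q-1)))) * (2:ℝ)^(-(((j:ℝ)+1)*(s*(q-1)))) := by ring
      _ ≤ (c * ϱ^(max 2 (max p q) - 1)) * (2:ℝ)^(-(j:ℝ)*s*(q-1)) :=
          mul_le_mul hKKC3c hmono h2jp.le hcr
      _ = c * ϱ^(max 2 (max p q) - 1) * (2:ℝ)^(-(j:ℝ)*s*(q-1)) := by ring
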